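/- Let f_1,…,f_n be convex differentiable with L-Lipschitz gradients, x* with ∇((1/n)∑f_i)(x*) = 0, and φ_1,…,φ_n ∈ H. For a uniformly random index j ∈ [n], define new points φ'_i = φ_i for i ≠ j and φ'_j = x. Then the average over j of (1/n)∑_i ‖∇f_i(φ'_i) − ∇f_i(x*)‖² equals (1 − 1/n)·(1/n)∑_i ‖∇f_i(φ_i) − ∇f_i(x*)‖² + (1/n²)∑_i ‖∇f_i(x) − ∇f_i(x*)‖², which is at most (1 − 1/n)·(1/n)∑_i‖∇f_i(φ_i) − ∇f_i(x*)‖² + (2L/n)(F(x) − F(x*)). -/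

import Mathlib

open scoped BigOperators
open RealInnerProductSpace

section Aux

variable {H : Type*} [NormedAddCommGroup H] [InnerProductSpace ℝ H] [CompleteSpace H]

lemma aux_curve_deriv {f : H → ℝ} {g : H → H} (hgrad : ∀ x, HasGradientAt f (g x) x)
    (w v : H) (t : ℝ) :
    HasDerivAt (fun s : ℝ => f (w + s • v)) ⟪g (w + t • v), v⟫ t := by
  have hc : HasDerivAt (fun s : ℝ => w + s • v) v t := by
    simpa using ((hasDerivAt_id t).smul_const v).const_add w
  have hf := (hasGradientAt_iff_hasFDerivAt.mp (hgrad (w + t • v))).comp_hasDerivAt t hc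
  simpa [InnerProductSpace.toDual_apply_apply, Function.comp_def] using hf

lemma aux_convex_first_order {f : H → ℝ} (hconv : ConvexOn ℝ Set.univ f)
    {g : H → H} (hgrad : ∀ x, HasGradientAt f (g x) x) (y u : H) :
    f y + ⟪g y, u - y⟫ ≤ f u := by
  have hd : HasDerivAt (fun s : ℝ => f (y + s • (u - y))) ⟪g y, u - y⟫ 0 := by
    simpa using aux_curve_deriv hgrad y (u - y) 0
  have hslope : Filter.Tendsto (slope (fun s : ℝ => f (y + s • (u - y))) 0)
      (nhdsWithin 0 (Set.Ioi 0)) (nhds ⟪g y, u - y⟫) :=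
    (hasDerivAt_iff_tendsto_slope.mp hd).mono_left
      (nhdsWithin_mono 0 (fun t ht => ne_of_gt ht))
  have hle : ⟪g y, u - y⟫ ≤ f u - f y := by
    refine le_of_tendsto hslope ?_
    filter_upwards [Ioo_mem_nhdsGT_of_mem (by norm_num : (0:ℝ) ∈ Set.Ico 0 1)] with t ht
    have ht0 : 0 < t := ht.1
    have ht1 : t < 1 := ht.2
    have hcomb : f (y + t • (u - y)) ≤ (1 - t) * f y + t * f u := by
      have := hconv.2 (Set.mem_univ y) (Set.mem_univ u) (by linarith : (0:ℝ) ≤ 1 - t)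
        (le_of_lt ht0) (by ring)
      have heq : (1 - t) • y + t • u = y + t • (u - y) := by
        rw [smul_sub]; module
      simpa [heq, smul_eq_mul] using this
    rw [slope_def_field]
    simp only [zero_smul, add_zero]
    rw [sub_zero, div_le_iff₀ ht0]
    nlinarith [hcomb]
  linarith

lemma aux_descent {f : H → ℝ} {g : H → H} {L : ℝ} (hL : 0 < L)
    (hgrad : ∀ x, HasGradientAt f (g x) x)
    (hlip : ∀ a b, ‖g a - g b‖ ≤ L * ‖a - b‖) (w z : H) :
    f z ≤ f w + ⟪g w, z - w⟫ + L / 2 * ‖z - w‖ ^ 2 := by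
  set v := z - w with hv
  set ψ : ℝ → ℝ := fun t => f (w + t • v) - t * ⟪g w, v⟫ - L * t ^ 2 / 2 * ‖v‖ ^ 2 with hψ
  have hd : ∀ t : ℝ, HasDerivAt ψ (⟪g (w + t • v), v⟫ - ⟪g w, v⟫ - L * t * ‖v‖ ^ 2) t := by
    intro t
    have h1 := aux_curve_deriv hgrad w v t
    have h2 : HasDerivAt (fun s : ℝ => s * ⟪g w, v⟫) ⟪g w, v⟫ t := by
      simpa using (hasDerivAt_id t).mul_const (⟪g w, v⟫)
    have h3 : HasDerivAt (fun s : ℝ => L * s ^ 2 / 2 * ‖v‖ ^ 2) (L * t * ‖v‖ ^ 2) t := by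
      have : HasDerivAt (fun s : ℝ => s ^ 2) (2 * t) t := by
        simpa using hasDerivAt_pow 2 t
      have := ((this.const_mul L).div_const 2).mul_const (‖v‖ ^ 2)
      refine this.congr_deriv ?_; ring
    exact (h1.sub h2).sub h3
  have hanti : AntitoneOn ψ (Set.Icc 0 1) := by
    apply antitoneOn_of_deriv_nonpos (convex_Icc 0 1)
    · exact fun t _ => ((hd t).differentiableAt).continuousAt.continuousWithinAt
    · exact fun t _ => ((hd t).differentiableAt).differentiableWithinAt
    · intro t ht
      rw [interior_Icc] at ht
      rw [(hd t).deriv]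
      have hin : ⟪g (w + t • v) - g w, v⟫ ≤ L * t * ‖v‖ ^ 2 := by
        calc ⟪g (w + t • v) - g w, v⟫ ≤ ‖g (w + t • v) - g w‖ * ‖v‖ :=
              real_inner_le_norm _ _
          _ ≤ (L * ‖(w + t • v) - w‖) * ‖v‖ := by
              apply mul_le_mul_of_nonneg_right (hlip _ _) (norm_nonneg _)
          _ = L * t * ‖v‖ ^ 2 := by
              rw [add_sub_cancel_left, norm_smul, Real.norm_eq_abs,
                abs_of_pos ht.1]; ring
      rw [inner_sub_left] at hin
      linarith
  have := hanti (Set.left_mem_Icc.mpr zero_le_one) (Set.right_mem_Icc.mpr zero_le_one)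
    zero_le_one
  simp only [hψ, one_smul, zero_smul, add_zero, one_pow, zero_pow, mul_zero, zero_mul,
    mul_one, sub_zero] at this
  have hz : w + v = z := by rw [hv]; abel
  rw [hz] at this
  nlinarith [this]

lemma aux_cocoercive {f : H → ℝ} (hconv : ConvexOn ℝ Set.univ f)
    {g : H → H} {L : ℝ} (hL : 0 < L) (hgrad : ∀ x, HasGradientAt f (g x) x)
    (hlip : ∀ a b, ‖g a - g b‖ ≤ L * ‖a - b‖) (x y : H) :
    ‖g x - g y‖ ^ 2 ≤ 2 * L * (f x - f y - ⟪g y, x - y⟫) := by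
  set u := x - (1 / L) • (g x - g y) with hu
  have h1 : f y + ⟪g y, u - y⟫ ≤ f u := aux_convex_first_order hconv hgrad y u
  have h2 : f u ≤ f x + ⟪g x, u - x⟫ + L / 2 * ‖u - x‖ ^ 2 := aux_descent hL hgrad hlip x u
  have hux : u - x = -((1 / L) • (g x - g y)) := by rw [hu]; abel
  have hnorm : ‖u - x‖ ^ 2 = (1 / L) ^ 2 * ‖g x - g y‖ ^ 2 := by
    rw [hux, norm_neg, norm_smul, Real.norm_eq_abs, abs_of_pos (by positivity : (0:ℝ) < 1/L)]
    ring
  have huy : u - y = (x - y) - (1 / L) • (g x - g y) := by rw [hu]; abel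
  have hiy : ⟪g y, u - y⟫ = ⟪g y, x - y⟫ - (1 / L) * ⟪g y, g x - g y⟫ := by
    rw [huy, inner_sub_right, real_inner_smul_right]
  have hix : ⟪g x, u - x⟫ = -((1 / L) * ⟪g x, g x - g y⟫) := by
    rw [hux, inner_neg_right, real_inner_smul_right]
  have hdiff : ⟪g x, g x - g y⟫ - ⟪g y, g x - g y⟫ = ‖g x - g y‖ ^ 2 := by
    rw [← inner_sub_left, real_inner_self_eq_norm_sq]
  have hL' : L ≠ 0 := ne_of_gt hL
  rw [hiy] at h1; rw [hix, hnorm] at h2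
  have key : (1 / (2 * L)) * ‖g x - g y‖ ^ 2 ≤ f x - f y - ⟪g y, x - y⟫ := by
    have e1 : f x + -((1 / L) * ⟪g x, g x - g y⟫) + L / 2 * ((1/L)^2 * ‖g x - g y‖^2)
        = f x - (1/L) * ⟪g x, g x - g y⟫ + (1/(2*L)) * ‖g x - g y‖^2 := by
      field_simp; ring
    rw [e1] at h2
    have := le_trans h1 h2
    have e2 : (1/L) * ⟪g x, g x - g y⟫ - (1/L) * ⟪g y, g x - g y⟫
        = (1/L) * ‖g x - g y‖ ^ 2 := by rw [← mul_sub, hdiff]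
    have e3 : (1/L) * ‖g x - g y‖ ^ 2 - (1/(2*L)) * ‖g x - g y‖ ^ 2
        = (1/(2*L)) * ‖g x - g y‖ ^ 2 := by field_simp; ring
    linarith [this, e2, e3]
  calc ‖g x - g y‖ ^ 2 = 2 * L * ((1 / (2*L)) * ‖g x - g y‖ ^ 2) := by field_simp
    _ ≤ 2 * L * (f x - f y - ⟪g y, x - y⟫) := by
        apply mul_le_mul_of_nonneg_left key (by positivity)

end Aux

theorem stmt18 {H : Type*} [NormedAddCommGroup H] [InnerProductSpace ℝ H] [CompleteSpace H]
    (n : ℕ) (hn : 1 ≤ n) (f : Fin n → H → ℝ) (g : Fin n → H → H) (L : ℝ) (hL : 0 < L)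
    (hconv : ∀ i, ConvexOn ℝ Set.univ (f i))
    (hgrad : ∀ i x, HasGradientAt (f i) (g i x) x)
    (hlip : ∀ i x y, ‖g i x - g i y‖ ≤ L * ‖x - y‖)
    (xs : H) (hxs : (1 / (n : ℝ)) • ∑ i, g i xs = 0)
    (x : H) (φ : Fin n → H) :
    (1 / (n : ℝ)) * ∑ j, (1 / (n : ℝ)) *
        ∑ i, ‖g i (if i = j then x else φ i) - g i xs‖ ^ 2 =
      (1 - 1 / (n : ℝ)) * ((1 / (n : ℝ)) * ∑ i, ‖g i (φ i) - g i xs‖ ^ 2)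
        + (1 / (n : ℝ) ^ 2) * ∑ i, ‖g i x - g i xs‖ ^ 2 ∧
    (1 - 1 / (n : ℝ)) * ((1 / (n : ℝ)) * ∑ i, ‖g i (φ i) - g i xs‖ ^ 2)
        + (1 / (n : ℝ) ^ 2) * ∑ i, ‖g i x - g i xs‖ ^ 2 ≤
      (1 - 1 / (n : ℝ)) * ((1 / (n : ℝ)) * ∑ i, ‖g i (φ i) - g i xs‖ ^ 2)
        + (2 * L / (n : ℝ)) *
            ((1 / (n : ℝ)) * ∑ i, f i x - (1 / (n : ℝ)) * ∑ i, f i xs) := by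
  have hn0 : (n : ℝ) ≠ 0 := by positivity
  set A : Fin n → ℝ := fun i => ‖g i (φ i) - g i xs‖ ^ 2 with hA
  set B : Fin n → ℝ := fun i => ‖g i x - g i xs‖ ^ 2 with hB
  constructor
  · have hinner : ∀ j, (∑ i, ‖g i (if i = j then x else φ i) - g i xs‖ ^ 2)
        = (∑ i, A i) + (B j - A j) := by
      intro j
      have hterm : ∀ i, ‖g i (if i = j then x else φ i) - g i xs‖ ^ 2
          = A i + (if i = j then B i - A i else 0) := by
        intro i; split_ifs with h <;> simp [hA, hB]
      rw [Finset.sum_congr rfl (fun i _ => hterm i), Finset.sum_add_distrib,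
        Finset.sum_ite_eq' Finset.univ j (fun i => B i - A i)]
      simp
    rw [Finset.sum_congr rfl (fun j _ => by rw [hinner j])]
    rw [← Finset.mul_sum, Finset.sum_add_distrib, Finset.sum_const, Finset.card_univ,
      Fintype.card_fin, Finset.sum_sub_distrib, nsmul_eq_mul]
    field_simp
    ring
  · have hkey : (∑ i, B i) ≤ 2 * L * ((∑ i, f i x) - (∑ i, f i xs)) := by
      have hco : ∀ i, B i ≤ 2 * L * (f i x - f i xs - ⟪g i xs, x - xs⟫) := fun i =>
        aux_cocoercive (hconv i) hL (hgrad i) (hlip i) x xs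
      have hsum0 : (∑ i, g i xs) = 0 := by
        rcases smul_eq_zero.mp hxs with h | h
        · exact absurd h (by positivity)
        · exact h
      calc (∑ i, B i) ≤ ∑ i, 2 * L * (f i x - f i xs - ⟪g i xs, x - xs⟫) :=
            Finset.sum_le_sum (fun i _ => hco i)
        _ = 2 * L * ((∑ i, f i x) - (∑ i, f i xs) - ⟪∑ i, g i xs, x - xs⟫) := by
            rw [← Finset.mul_sum, sum_inner]
            congr 1
            rw [Finset.sum_sub_distrib, Finset.sum_sub_distrib]
        _ = 2 * L * ((∑ i, f i x) - (∑ i, f i xs)) := by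
            rw [hsum0, inner_zero_left]; ring
    have h2 : (1 / (n : ℝ) ^ 2) * ∑ i, B i ≤
        (2 * L / (n : ℝ)) * ((1 / (n : ℝ)) * ∑ i, f i x - (1 / (n : ℝ)) * ∑ i, f i xs) := by
      have e : (2 * L / (n : ℝ)) * ((1 / (n : ℝ)) * ∑ i, f i x - (1 / (n : ℝ)) * ∑ i, f i xs)
          = (1 / (n : ℝ) ^ 2) * (2 * L * ((∑ i, f i x) - (∑ i, f i xs))) := by
        ring
      rw [e]
      exact mul_le_mul_of_nonneg_left hkey (by positivity)
    linarith
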